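/- Let I be a nonempty set and let λ : I → ℂ be a function with finite support. On the space M(1,λ) = e^{λx} ℂ[x_i | i ∈ I] of functions (where λx = Σ λ_i x_i), define an action of the Heisenberg algebra H_I by letting p_i act as ∂/∂x_i, q_i act as multiplication by x_i, and k act as the identity. Then M(1,λ) is an irreducible H_I-module. -/

import Mathlib

/-- A level-one module for the Heisenberg Lie algebra `H_I` with basis
`{p_i, q_i, k | i ∈ I}`, relations `[p_i, q_j] = δ_{ij} k`, all other brackets zero,
where the central element `k` acts as the identity. -/
structure HeisenbergRep (I : Type) (W : Type) [AddCommGroup W] [Module ℂ W] where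
  p : I → Module.End ℂ W
  q : I → Module.End ℂ W
  comm_pp : ∀ i j, Commute (p i) (p j)
  comm_qq : ∀ i j, Commute (q i) (q j)
  comm_pq_same : ∀ i, p i * q i - q i * p i = 1
  comm_pq_ne : ∀ i j, i ≠ j → Commute (p i) (q j)

namespace HeisenbergRep

variable {I : Type} {W : Type} [AddCommGroup W] [Module ℂ W]

/-- A submodule stable under all the Heisenberg operators. -/
def Stable (ρ : HeisenbergRep I W) (S : Submodule ℂ W) : Prop :=
  (∀ i, ∀ w ∈ S, ρ.p i w ∈ S) ∧ (∀ i, ∀ w ∈ S, ρ.q i w ∈ S)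

/-- `S` is a nonzero stable submodule with no proper nonzero stable submodule. -/
def IsSimpleSub (ρ : HeisenbergRep I W) (S : Submodule ℂ W) : Prop :=
  ρ.Stable S ∧ S ≠ ⊥ ∧ ∀ T : Submodule ℂ W, ρ.Stable T → T ≤ S → T = ⊥ ∨ T = S

/-- Irreducibility of the representation. -/
def IsIrreducible (ρ : HeisenbergRep I W) : Prop := ρ.IsSimpleSub ⊤

/-- Restricted: for each vector `w`, `p_i w = 0` for all but finitely many `i`. -/
def Restricted (ρ : HeisenbergRep I W) : Prop :=
  ∀ w : W, {i : I | ρ.p i w ≠ 0}.Finite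

/-- Isomorphism of Heisenberg representations. -/
def Iso {W' : Type} [AddCommGroup W'] [Module ℂ W']
    (ρ : HeisenbergRep I W) (ρ' : HeisenbergRep I W') : Prop :=
  ∃ e : W ≃ₗ[ℂ] W', (∀ i w, e (ρ.p i w) = ρ'.p i (e w)) ∧
    (∀ i w, e (ρ.q i w) = ρ'.q i (e w))

end HeisenbergRep

/-- An endomorphism is locally finite if every vector lies in a
finitely generated (equivalently, finite-dimensional) stable subspace. -/
def Module.End.LocallyFinite {W : Type} [AddCommGroup W] [Module ℂ W]
    (T : Module.End ℂ W) : Prop :=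
  ∀ w : W, ∃ S : Submodule ℂ W, w ∈ S ∧ S.FG ∧ ∀ v ∈ S, T v ∈ S

/-- An endomorphism is locally nilpotent if every vector is killed by some power. -/
def Module.End.LocallyNilpotent {W : Type} [AddCommGroup W] [Module ℂ W]
    (T : Module.End ℂ W) : Prop :=
  ∀ w : W, ∃ n : ℕ, (T ^ n) w = 0

/-- The category `F`: restricted level-one modules on which every `p_i` is locally finite. -/
def HeisenbergRep.InCategoryF {I W : Type} [AddCommGroup W] [Module ℂ W]
    (ρ : HeisenbergRep I W) : Prop :=
  ρ.Restricted ∧ ∀ i, (ρ.p i).LocallyFinite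

section M1

open MvPolynomial

variable {I : Type}

lemma pderiv_comm' [DecidableEq I] (i j : I) (f : MvPolynomial I ℂ) :
    pderiv i (pderiv j f) = pderiv j (pderiv i f) := by
  induction f using MvPolynomial.induction_on' with
  | monomial s a =>
      simp only [pderiv_monomial]
      by_cases hij : i = j
      · subst hij; rfl
      · have h1 : ((s - Finsupp.single j 1 : I →₀ ℕ)) i = s i := by
          rw [Finsupp.tsub_apply, Finsupp.single_eq_of_ne hij, tsub_zero]
        have h2 : ((s - Finsupp.single i 1 : I →₀ ℕ)) j = s j := by
          rw [Finsupp.tsub_apply, Finsupp.single_eq_of_ne (Ne.symm hij), tsub_zero]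
        rw [h1, h2, tsub_tsub, tsub_tsub, add_comm (Finsupp.single j 1)]
        ring_nf
  | add p q hp hq => simp [hp, hq]

/-- The module `M(1,λ) = e^{λx} ℂ[x_i | i ∈ I]`, modelled on the polynomial ring
(`e^{λx} f ↔ f`), with `p_i = ∂/∂x_i` (which becomes `∂/∂x_i + λ_i` on the polynomial
part), `q_i` multiplication by `x_i`, and `k = 1`. -/
noncomputable def M1rep [DecidableEq I] (lam : I →₀ ℂ) :
    HeisenbergRep I (MvPolynomial I ℂ) where
  p i := (pderiv i).toLinearMap + lam i • (1 : Module.End ℂ (MvPolynomial I ℂ))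
  q i := LinearMap.mulLeft ℂ (X i)
  comm_pp i j := by
    apply LinearMap.ext; intro f
    simp [Module.End.mul_apply, pderiv_comm' i j, smul_eq_C_mul]
    ring
  comm_qq i j := by
    apply LinearMap.ext; intro f
    simp [Module.End.mul_apply]
    ring
  comm_pq_same i := by
    apply LinearMap.ext; intro f
    simp [Module.End.mul_apply, pderiv_mul, smul_eq_C_mul]
    ring
  comm_pq_ne i j hij := by
    apply LinearMap.ext; intro f
    simp [Module.End.mul_apply, pderiv_mul, pderiv_X_of_ne (Ne.symm hij), smul_eq_C_mul]
    ring

end M1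


section Aux
open MvPolynomial

variable {I : Type} [DecidableEq I]

private lemma coeff_pderiv' (i : I) (m : I →₀ ℕ) (f : MvPolynomial I ℂ) :
    coeff m (pderiv i f) = (m i + 1 : ℕ) * coeff (m + Finsupp.single i 1) f := by
  induction f using MvPolynomial.induction_on' with
  | monomial s a =>
      rw [pderiv_monomial, coeff_monomial, coeff_monomial]
      by_cases hs : s = m + Finsupp.single i 1
      · subst hs
        have h1 : m + Finsupp.single i 1 - Finsupp.single i 1 = m := by simp
        have h2 : ((m + Finsupp.single i 1 : I →₀ ℕ)) i = m i + 1 := by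
          rw [Finsupp.add_apply, Finsupp.single_eq_same]
        rw [if_pos h1, h2, if_pos rfl]
        push_cast; ring
      · rw [if_neg hs]
        by_cases hsi : s i = 0
        · by_cases h : s - Finsupp.single i 1 = m
          · simp [h, hsi]
          · simp [h]
        · have h : s - Finsupp.single i 1 ≠ m := by
            intro h
            apply hs
            rw [← h]
            ext j
            rw [Finsupp.add_apply, Finsupp.tsub_apply]
            rcases eq_or_ne i j with hij | hij
            · subst hij; rw [Finsupp.single_eq_same]; omega
            · rw [Finsupp.single_eq_of_ne (Ne.symm hij)]; omega
          simp [h]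
  | add p q hp hq => simp [hp, hq]; ring

private lemma sub_add_single' {d : I →₀ ℕ} {i : I} (h : d i ≠ 0) :
    d - Finsupp.single i 1 + Finsupp.single i 1 = d := by
  ext j
  rw [Finsupp.add_apply, Finsupp.tsub_apply]
  rcases eq_or_ne i j with hij | hij
  · subst hij; rw [Finsupp.single_eq_same]; omega
  · rw [Finsupp.single_eq_of_ne (Ne.symm hij)]; omega

private lemma exists_pderiv_ne_zero' {f : MvPolynomial I ℂ}
    (hd : f.totalDegree ≠ 0) : ∃ i, pderiv i f ≠ 0 := by
  have hex : ∃ d ∈ f.support, d ≠ 0 := by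
    by_contra h
    push_neg at h
    apply hd
    rw [totalDegree]
    apply Nat.le_zero.1
    apply Finset.sup_le
    intro d hdsup
    rw [h d hdsup]
    simp
  obtain ⟨d, hdsup, hd0⟩ := hex
  obtain ⟨i, hi⟩ := Finsupp.ne_iff.1 hd0
  simp only [Finsupp.coe_zero, Pi.zero_apply] at hi
  refine ⟨i, fun hzero => ?_⟩
  have hc := coeff_pderiv' i (d - Finsupp.single i 1) f
  rw [hzero, sub_add_single' hi, coeff_zero] at hc
  have hle : ((d - Finsupp.single i 1 : I →₀ ℕ)) i + 1 = d i := by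
    rw [Finsupp.tsub_apply, Finsupp.single_eq_same]; omega
  rw [hle] at hc
  have := MvPolynomial.mem_support_iff.1 hdsup
  exact this (by
    have h2 : ((d i : ℂ)) ≠ 0 := Nat.cast_ne_zero.2 hi
    field_simp at hc
    exact (mul_eq_zero.1 hc.symm).resolve_left h2)

private lemma totalDegree_pderiv_lt' {f : MvPolynomial I ℂ}
    (hd : f.totalDegree ≠ 0) (i : I) : (pderiv i f).totalDegree < f.totalDegree := by
  rcases eq_or_ne (pderiv i f) 0 with h0 | h0
  · rw [h0, totalDegree_zero]; omega
  · rw [totalDegree, Finset.sup_lt_iff (by simpa [bot_eq_zero] using Nat.pos_of_ne_zero hd)]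
    intro m hm
    have hcm := MvPolynomial.mem_support_iff.1 hm
    rw [coeff_pderiv'] at hcm
    have hc2 : coeff (m + Finsupp.single i 1) f ≠ 0 := by
      intro h; rw [h, mul_zero] at hcm; exact hcm rfl
    have := le_totalDegree (MvPolynomial.mem_support_iff.2 hc2)
    have hsum : ((m + Finsupp.single i 1 : I →₀ ℕ)).sum (fun _ e => e)
        = m.sum (fun _ e => e) + 1 := by
      rw [Finsupp.sum_add_index (by simp) (by intros; rfl)]
      simp [Finsupp.sum_single_index]
    omega

private lemma eq_C_of_totalDegree_eq_zero' {f : MvPolynomial I ℂ} (h : f.totalDegree = 0) :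
    f = C (coeff 0 f) := by
  ext m
  rcases eq_or_ne m 0 with hm | hm
  · subst hm; simp
  · rw [coeff_C, if_neg (Ne.symm hm)]
    apply coeff_eq_zero_of_totalDegree_lt
    rw [h]
    obtain ⟨i, hi⟩ := Finsupp.ne_iff.1 hm
    simp only [Finsupp.coe_zero, Pi.zero_apply] at hi
    have himem : i ∈ m.support := Finsupp.mem_support_iff.2 hi
    calc (0 : ℕ) < m i := Nat.pos_of_ne_zero hi
    _ ≤ ∑ j ∈ m.support, m j := Finset.single_le_sum (fun _ _ => Nat.zero_le _) himem

private lemma one_mem_of_closed' (T : Submodule ℂ (MvPolynomial I ℂ))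
    (hcl : ∀ i, ∀ g ∈ T, pderiv i g ∈ T) :
    ∀ n : ℕ, ∀ f : MvPolynomial I ℂ, f.totalDegree ≤ n → f ≠ 0 → f ∈ T →
      (1 : MvPolynomial I ℂ) ∈ T := by
  have base : ∀ f : MvPolynomial I ℂ, f.totalDegree = 0 → f ≠ 0 → f ∈ T →
      (1 : MvPolynomial I ℂ) ∈ T := by
    intro f hdeg hf0 hfT
    have hfC := eq_C_of_totalDegree_eq_zero' hdeg
    have hc : coeff 0 f ≠ 0 := fun h => hf0 (by rw [hfC, h, map_zero])
    have : (1 : MvPolynomial I ℂ) = (coeff 0 f)⁻¹ • f := by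
      rw [hfC]
      simp [smul_eq_C_mul, ← C_mul, inv_mul_cancel₀ hc]
    rw [this]
    exact T.smul_mem _ hfT
  intro n
  induction n with
  | zero => intro f hdeg hf0 hfT; exact base f (Nat.le_zero.1 hdeg) hf0 hfT
  | succ n ih =>
    intro f hdeg hf0 hfT
    rcases eq_or_ne f.totalDegree 0 with h0 | h0
    · exact base f h0 hf0 hfT
    · obtain ⟨i, hi⟩ := exists_pderiv_ne_zero' h0
      exact ih (pderiv i f)
        (by have := totalDegree_pderiv_lt' h0 i; omega) hi (hcl i f hfT)

end Aux

/-- `M(1,λ)` is an irreducible module over the Heisenberg Lie algebra `H_I`. -/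
theorem M1rep_isIrreducible {I : Type} [Nonempty I] [DecidableEq I] (lam : I →₀ ℂ) :
    (M1rep lam).IsIrreducible := by
  open MvPolynomial in
  refine ⟨⟨fun i w _ => Submodule.mem_top, fun i w _ => Submodule.mem_top⟩, ?_, ?_⟩
  · intro h
    have h1 : (1 : MvPolynomial I ℂ) ∈ (⊥ : Submodule ℂ (MvPolynomial I ℂ)) :=
      h ▸ Submodule.mem_top
    simpa using h1
  · intro T hT _
    rcases eq_or_ne T ⊥ with h | h
    · exact Or.inl h
    · right
      obtain ⟨f, hfT, hf0⟩ := (Submodule.ne_bot_iff T).1 h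
      have hcl : ∀ i, ∀ g ∈ T, pderiv i g ∈ T := by
        intro i g hg
        have hp := hT.1 i g hg
        have heq : pderiv i g = (M1rep lam).p i g - lam i • g := by
          simp [M1rep]
        rw [heq]
        exact T.sub_mem hp (T.smul_mem _ hg)
      have h1 : (1 : MvPolynomial I ℂ) ∈ T :=
        one_mem_of_closed' T hcl f.totalDegree f le_rfl hf0 hfT
      have hX : ∀ i, ∀ g ∈ T, X i * g ∈ T := by
        intro i g hg
        have := hT.2 i g hg
        simpa [M1rep] using this
      have hall : ∀ g : MvPolynomial I ℂ, g ∈ T := by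
        intro g
        induction g using MvPolynomial.induction_on with
        | C a =>
            have : C a = a • (1 : MvPolynomial I ℂ) := by rw [smul_eq_C_mul, mul_one]
            rw [this]
            exact T.smul_mem a h1
        | add p q hp hq => exact T.add_mem hp hq
        | mul_X p i hp =>
            have := hX i p hp
            rwa [mul_comm] at this
      exact Submodule.eq_top_iff'.2 hall
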